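/- Let ρ : ℝ² → [0,∞) be measurable, integrable and essentially bounded. Then for every x ∈ ℝ², | ∫_{ℝ²} ((x−y)/|x−y|²) ρ(y) dy | ≤ 2 √(2π) ‖ρ‖_{L¹(ℝ²)}^{1/2} ‖ρ‖_{L^∞(ℝ²)}^{1/2}. -/

import Mathlib

open MeasureTheory
open Set Metric
open scoped ENNReal NNReal

noncomputable abbrev R2 : Type := EuclideanSpace ℝ (Fin 2)

lemma vol_ball_R2 (x : R2) (r : ℝ) :
    volume (Metric.ball x r) = ENNReal.ofReal r ^ 2 * ENNReal.ofReal Real.pi := by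
  rw [EuclideanSpace.volume_ball]
  have h2 : Real.Gamma ((Fintype.card (Fin 2) : ℝ) / 2 + 1) = 1 := by
    rw [show ((Fintype.card (Fin 2) : ℝ) / 2 + 1) = (1 : ℕ) + 1 by push_cast; norm_num,
      Real.Gamma_nat_eq_factorial]
    simp
  rw [h2, Fintype.card_fin, div_one, Real.sq_sqrt Real.pi_pos.le]

lemma ball_lintegral_inv (x : R2) {R : ℝ} (hR : 0 < R) :
    ∫⁻ y in Metric.ball x R, ENNReal.ofReal ‖x - y‖⁻¹ ∂volume
      ≤ ENNReal.ofReal (2 * Real.pi * R) := by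
  have hmble : Measurable fun y : R2 => ‖x - y‖⁻¹ :=
    ((measurable_const.sub measurable_id).norm).inv
  rw [lintegral_eq_lintegral_meas_lt _ (Filter.Eventually.of_forall fun y => by positivity)
    hmble.aemeasurable]
  have hbound : ∀ t ∈ Ioi (0 : ℝ),
      (volume.restrict (Metric.ball x R)) {a : R2 | t < ‖x - a‖⁻¹}
        ≤ ENNReal.ofReal (min t⁻¹ R) ^ 2 * ENNReal.ofReal Real.pi := by
    intro t ht
    have hsub : {a : R2 | t < ‖x - a‖⁻¹} ∩ Metric.ball x R ⊆ Metric.ball x (min t⁻¹ R) := by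
      rintro y ⟨hy1, hy2⟩
      have hd : 0 < ‖x - y‖ := inv_pos.mp (lt_trans ht hy1)
      have h1 : ‖x - y‖ < t⁻¹ := by
        have h := mul_lt_mul_of_pos_right hy1 hd
        rw [inv_mul_cancel₀ hd.ne'] at h
        have ht0 : (0:ℝ) < t := ht
        calc ‖x - y‖ = t⁻¹ * (t * ‖x - y‖) := by
              rw [← mul_assoc, inv_mul_cancel₀ ht0.ne', one_mul]
          _ < t⁻¹ * 1 := mul_lt_mul_of_pos_left h (inv_pos.mpr ht)
          _ = t⁻¹ := mul_one _
      have h2 : dist y x = ‖x - y‖ := by rw [dist_eq_norm, norm_sub_rev]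
      rw [mem_ball, h2]
      rw [mem_ball, h2] at hy2
      exact lt_min h1 hy2
    calc (volume.restrict (Metric.ball x R)) {a : R2 | t < ‖x - a‖⁻¹}
        = volume ({a : R2 | t < ‖x - a‖⁻¹} ∩ Metric.ball x R) :=
          Measure.restrict_apply' measurableSet_ball
      _ ≤ volume (Metric.ball x (min t⁻¹ R)) := measure_mono hsub
      _ = ENNReal.ofReal (min t⁻¹ R) ^ 2 * ENNReal.ofReal Real.pi := vol_ball_R2 _ _
  calc ∫⁻ t in Ioi (0 : ℝ), (volume.restrict (Metric.ball x R)) {a : R2 | t < ‖x - a‖⁻¹}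
      ≤ ∫⁻ t in Ioi (0 : ℝ), ENNReal.ofReal (min t⁻¹ R) ^ 2 * ENNReal.ofReal Real.pi :=
        setLIntegral_mono' measurableSet_Ioi hbound
    _ = (∫⁻ t in Ioc (0 : ℝ) R⁻¹, ENNReal.ofReal (min t⁻¹ R) ^ 2 * ENNReal.ofReal Real.pi)
        + ∫⁻ t in Ioi R⁻¹, ENNReal.ofReal (min t⁻¹ R) ^ 2 * ENNReal.ofReal Real.pi := by
        rw [← lintegral_union measurableSet_Ioi (Ioc_disjoint_Ioi le_rfl),
          Ioc_union_Ioi_eq_Ioi (inv_pos.mpr hR).le]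
    _ ≤ ENNReal.ofReal (Real.pi * R) + ENNReal.ofReal (Real.pi * R) := by
        gcongr
        · -- Ioc part
          have : ∫⁻ t in Ioc (0 : ℝ) R⁻¹, ENNReal.ofReal (min t⁻¹ R) ^ 2 * ENNReal.ofReal Real.pi
              = ∫⁻ _ in Ioc (0 : ℝ) R⁻¹, ENNReal.ofReal R ^ 2 * ENNReal.ofReal Real.pi := by
            refine setLIntegral_congr_fun measurableSet_Ioc (fun t ht => ?_)
            have hle : R ≤ t⁻¹ := by
              rw [← inv_inv R]
              exact inv_anti₀ ht.1 ht.2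
            rw [min_eq_right hle]
          rw [this, setLIntegral_const, Real.volume_Ioc, sub_zero,
            ← ENNReal.ofReal_pow hR.le, ← ENNReal.ofReal_mul (by positivity),
            ← ENNReal.ofReal_mul (by positivity)]
          apply ENNReal.ofReal_le_ofReal
          apply le_of_eq
          field_simp
        · -- Ioi part
          have : ∫⁻ t in Ioi R⁻¹, ENNReal.ofReal (min t⁻¹ R) ^ 2 * ENNReal.ofReal Real.pi
              = ∫⁻ t in Ioi R⁻¹, ENNReal.ofReal (Real.pi * t ^ (-2 : ℝ)) := by
            refine setLIntegral_congr_fun measurableSet_Ioi (fun t ht => ?_)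
            have ht0 : 0 < t := lt_trans (inv_pos.mpr hR) ht
            have hlt : t⁻¹ ≤ R := by
              rw [← inv_inv R]
              exact inv_anti₀ (inv_pos.mpr hR) ht.le
            rw [min_eq_left hlt, ← ENNReal.ofReal_pow (by positivity),
              ← ENNReal.ofReal_mul (by positivity)]
            congr 1
            rw [show (-2 : ℝ) = -((2 : ℕ) : ℝ) by norm_num, Real.rpow_neg ht0.le,
              Real.rpow_natCast, ← inv_pow]
            ring
          rw [this, ← ofReal_integral_eq_lintegral_ofReal
            ((integrableOn_Ioi_rpow_of_lt (by norm_num) (inv_pos.mpr hR)).const_mul Real.pi)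
            ((ae_restrict_mem measurableSet_Ioi).mono fun t ht => by
              have ht0 : 0 < t := lt_trans (inv_pos.mpr hR) ht
              positivity)]
          apply ENNReal.ofReal_le_ofReal
          rw [MeasureTheory.integral_const_mul, integral_Ioi_rpow_of_lt (by norm_num) (inv_pos.mpr hR)]
          norm_num [Real.rpow_neg_one]
    _ = ENNReal.ofReal (2 * Real.pi * R) := by
        rw [← ENNReal.ofReal_add (by positivity) (by positivity)]
        ring_nf

/-- For a nonnegative, measurable, integrable and essentially bounded density `ρ` on `ℝ²`,
the field `E(x) = ∫ ((x−y)/|x−y|²) ρ(y) dy` satisfies the pointwise bound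
`|E(x)| ≤ 2 √(2π) ‖ρ‖_{L¹}^{1/2} ‖ρ‖_{L^∞}^{1/2}`. -/
theorem field_Linfty_bound (ρ : R2 → ℝ) (hmeas : Measurable ρ) (hpos : ∀ x, 0 ≤ ρ x)
    (hint : Integrable ρ) (hbdd : MemLp ρ ⊤ volume) (x : R2) :
    ‖∫ y, (‖x - y‖ ^ 2)⁻¹ • ρ y • (x - y)‖
      ≤ 2 * Real.sqrt (2 * Real.pi) * Real.sqrt (∫ y, ρ y)
        * Real.sqrt (eLpNorm ρ ⊤ volume).toReal := by
  set M : ℝ := (eLpNorm ρ ⊤ volume).toReal with hM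
  set L : ℝ := ∫ y, ρ y with hL
  have hL0 : 0 ≤ L := integral_nonneg hpos
  have hM0 : 0 ≤ M := ENNReal.toReal_nonneg
  have hRHS0 : 0 ≤ 2 * Real.sqrt (2 * Real.pi) * Real.sqrt L * Real.sqrt M := by positivity
  -- degenerate case : ρ = 0 a.e.
  have hzero : ρ =ᵐ[volume] 0 → ‖∫ y, (‖x - y‖ ^ 2)⁻¹ • ρ y • (x - y)‖
      ≤ 2 * Real.sqrt (2 * Real.pi) * Real.sqrt L * Real.sqrt M := by
    intro h0
    have : ∫ y, (‖x - y‖ ^ 2)⁻¹ • ρ y • (x - y) = 0 := by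
      rw [integral_eq_zero_of_ae]
      filter_upwards [h0] with y hy
      simp [hy]
    rw [this, norm_zero]
    exact hRHS0
  rcases eq_or_lt_of_le hL0 with hL0' | hLpos
  · exact hzero ((integral_eq_zero_iff_of_nonneg hpos hint).mp hL0'.symm)
  rcases eq_or_lt_of_le hM0 with hM0' | hMpos
  · refine hzero ?_
    have : eLpNorm ρ ⊤ volume = 0 := by
      rcases (ENNReal.toReal_eq_zero_iff _).mp hM0'.symm with h | h
      · exact h
      · exact absurd h hbdd.2.ne
    exact (eLpNorm_eq_zero_iff hmeas.aestronglyMeasurable (by simp)).mp this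
  -- main case
  set R : ℝ := Real.sqrt L / (Real.sqrt (2 * Real.pi) * Real.sqrt M) with hRdef
  have hR : 0 < R := by
    apply div_pos (Real.sqrt_pos.mpr hLpos)
    positivity
  -- a.e. bound ρ ≤ M
  have hae : ∀ᵐ y ∂volume, ρ y ≤ M := by
    filter_upwards [ae_le_eLpNormEssSup (f := ρ) (μ := volume)] with y hy
    have : (‖ρ y‖₊ : ℝ≥0∞) ≤ eLpNorm ρ ⊤ volume := by
      rwa [eLpNorm_exponent_top]
    calc ρ y ≤ |ρ y| := le_abs_self _
      _ = ((‖ρ y‖₊ : ℝ≥0∞)).toReal := by simp [Real.norm_eq_abs]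
      _ ≤ M := ENNReal.toReal_mono hbdd.2.ne this
  -- norm of integrand
  have hnorm : ∀ y : R2, ‖(‖x - y‖ ^ 2)⁻¹ • ρ y • (x - y)‖ = ρ y * ‖x - y‖⁻¹ := by
    intro y
    rw [norm_smul, norm_smul, Real.norm_eq_abs, Real.norm_eq_abs, abs_of_nonneg (by positivity),
      abs_of_nonneg (hpos y)]
    rcases eq_or_ne ‖x - y‖ 0 with h | h
    · simp [h]
    · field_simp [sq]
  have key : ∫⁻ y, ENNReal.ofReal ‖(‖x - y‖ ^ 2)⁻¹ • ρ y • (x - y)‖ ∂volume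
      ≤ ENNReal.ofReal (2 * Real.pi * M * R + L / R) := by
    have heq : ∀ y : R2, ENNReal.ofReal ‖(‖x - y‖ ^ 2)⁻¹ • ρ y • (x - y)‖
        = ENNReal.ofReal (ρ y * ‖x - y‖⁻¹) := fun y => by rw [hnorm y]
    simp_rw [heq]
    rw [← lintegral_add_compl (fun y => ENNReal.ofReal (ρ y * ‖x - y‖⁻¹))
      (measurableSet_ball (x := x) (ε := R))]
    have hball : ∫⁻ y in Metric.ball x R, ENNReal.ofReal (ρ y * ‖x - y‖⁻¹) ∂volume
        ≤ ENNReal.ofReal (2 * Real.pi * M * R) := by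
      calc ∫⁻ y in Metric.ball x R, ENNReal.ofReal (ρ y * ‖x - y‖⁻¹) ∂volume
          ≤ ∫⁻ y in Metric.ball x R, ENNReal.ofReal M * ENNReal.ofReal ‖x - y‖⁻¹ ∂volume := by
            apply lintegral_mono_ae
            filter_upwards [ae_restrict_of_ae hae] with y hy
            rw [← ENNReal.ofReal_mul hM0]
            exact ENNReal.ofReal_le_ofReal
              (mul_le_mul_of_nonneg_right hy (by positivity))
        _ = ENNReal.ofReal M * ∫⁻ y in Metric.ball x R, ENNReal.ofReal ‖x - y‖⁻¹ ∂volume :=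
            lintegral_const_mul _ (((measurable_const.sub measurable_id).norm).inv.ennreal_ofReal)
        _ ≤ ENNReal.ofReal M * ENNReal.ofReal (2 * Real.pi * R) := by
            gcongr
            exact ball_lintegral_inv x hR
        _ = ENNReal.ofReal (2 * Real.pi * M * R) := by
            rw [← ENNReal.ofReal_mul hM0]
            ring_nf
    have hout : ∫⁻ y in (Metric.ball x R)ᶜ, ENNReal.ofReal (ρ y * ‖x - y‖⁻¹) ∂volume
        ≤ ENNReal.ofReal (L / R) := by
      calc ∫⁻ y in (Metric.ball x R)ᶜ, ENNReal.ofReal (ρ y * ‖x - y‖⁻¹) ∂volume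
          ≤ ∫⁻ y in (Metric.ball x R)ᶜ, ENNReal.ofReal (ρ y * R⁻¹) ∂volume := by
            refine setLIntegral_mono' measurableSet_ball.compl fun y hy => ?_
            apply ENNReal.ofReal_le_ofReal
            apply mul_le_mul_of_nonneg_left _ (hpos y)
            have : R ≤ ‖x - y‖ := by
              have := (mem_ball.not.mp hy)
              rw [dist_eq_norm, norm_sub_rev] at this
              linarith [not_lt.mp this]
            exact inv_anti₀ hR this
        _ ≤ ∫⁻ y, ENNReal.ofReal (ρ y * R⁻¹) ∂volume := setLIntegral_le_lintegral _ _
        _ = ENNReal.ofReal (∫ y, ρ y * R⁻¹) := by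
            rw [ofReal_integral_eq_lintegral_ofReal (hint.mul_const _)
              (Filter.Eventually.of_forall fun y => mul_nonneg (hpos y) (inv_nonneg.mpr hR.le))]
        _ = ENNReal.ofReal (L / R) := by
            rw [integral_mul_const, div_eq_mul_inv]
    calc _ ≤ ENNReal.ofReal (2 * Real.pi * M * R) + ENNReal.ofReal (L / R) :=
          add_le_add hball hout
      _ = ENNReal.ofReal (2 * Real.pi * M * R + L / R) :=
          (ENNReal.ofReal_add (mul_nonneg (mul_nonneg (by positivity) hM0) hR.le)
            (div_nonneg hL0 hR.le)).symm
  calc ‖∫ y, (‖x - y‖ ^ 2)⁻¹ • ρ y • (x - y)‖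
      ≤ (∫⁻ y, ENNReal.ofReal ‖(‖x - y‖ ^ 2)⁻¹ • ρ y • (x - y)‖ ∂volume).toReal :=
        norm_integral_le_lintegral_norm _
    _ ≤ 2 * Real.sqrt (2 * Real.pi) * Real.sqrt L * Real.sqrt M := by
        have h1 : (∫⁻ y, ENNReal.ofReal ‖(‖x - y‖ ^ 2)⁻¹ • ρ y • (x - y)‖ ∂volume).toReal
            ≤ 2 * Real.pi * M * R + L / R :=
          ENNReal.toReal_le_of_le_ofReal
            (add_nonneg (mul_nonneg (mul_nonneg (by positivity) hM0) hR.le)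
              (div_nonneg hL0 hR.le)) key
        refine h1.trans (le_of_eq ?_)
        set a := Real.sqrt (2 * Real.pi) with hadef
        set b := Real.sqrt L with hbdef
        set c := Real.sqrt M with hcdef
        have ha : a ^ 2 = 2 * Real.pi := Real.sq_sqrt (by positivity)
        have hb : b ^ 2 = L := Real.sq_sqrt hL0
        have hc : c ^ 2 = M := Real.sq_sqrt hM0
        have ha0 : a ≠ 0 := (Real.sqrt_pos.mpr (by positivity)).ne'
        have hb0 : b ≠ 0 := (Real.sqrt_pos.mpr hLpos).ne'
        have hc0 : c ≠ 0 := (Real.sqrt_pos.mpr hMpos).ne'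
        rw [hRdef, ← ha, ← hb, ← hc]
        field_simp
        ring
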